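/- Suppose Λ_n < ∞. Then for every β > Λ_n, the derivative of the normalised partition function satisfies 0 ≤ β ∑_{j=1}^n g_{n,j} exp(−β g_{n,j}) ≤ (β/(β − Λ_n))² − 1; equivalently, 0 ≤ −β Z_n'(β) ≤ (β/(β − Λ_n))² − 1, where Z_n'(β) = −∑_j g_{n,j} e^{−β g_{n,j}}. -/

import Mathlib

open Filter MeasureTheory
open scoped ENNReal

/-- Maximum score `z_n^*`. -/
noncomputable def zmax (n : ℕ) (z : Fin n → ℝ) : ℝ := sSup (Set.range z)

/-- Gap `g_{n,j} = z_n^* - z_{n,j}`. -/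
noncomputable def gap (n : ℕ) (z : Fin n → ℝ) (j : Fin n) : ℝ := zmax n z - z j

/-- Cumulative gap-counting function `N_n(t)`. -/
noncomputable def Ncount (n : ℕ) (z : Fin n → ℝ) (t : ℝ) : ℕ :=
  {j : Fin n | gap n z j ≤ t}.ncard

/-- Normalised partition function `Z_n(β)`. -/
noncomputable def Zfun (n : ℕ) (z : Fin n → ℝ) (β : ℝ) : ℝ :=
  ∑ j : Fin n, Real.exp (-(β * gap n z j))

/-- Softmax probabilities `p_{n,j}(β)`. -/
noncomputable def softmaxP (n : ℕ) (z : Fin n → ℝ) (β : ℝ) (j : Fin n) : ℝ :=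
  Real.exp (β * z j) / ∑ ℓ : Fin n, Real.exp (β * z ℓ)

/-- Shannon entropy `H_n(β)`. -/
noncomputable def entropyH (n : ℕ) (z : Fin n → ℝ) (β : ℝ) : ℝ :=
  -∑ j : Fin n, softmaxP n z β j * Real.log (softmaxP n z β j)

/-- The set of values `log N_n(t) / t` over `t > 0`, whose supremum is `Λ_n`. -/
def lamSet (n : ℕ) (z : Fin n → ℝ) : Set ℝ :=
  {r | ∃ t : ℝ, 0 < t ∧ r = Real.log (Ncount n z t) / t}

/-- Second-largest entry of a finite vector (equals the largest in case of ties). -/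
noncomputable def secondLargest (n : ℕ) (v : Fin n → ℝ) : ℝ :=
  sInf (Set.range fun i => sSup (v '' {j | j ≠ i}))

/-- Top-two weight gap `D_n(β)`. -/
noncomputable def Dgap (n : ℕ) (z : Fin n → ℝ) (β : ℝ) : ℝ :=
  sSup (Set.range (softmaxP n z β)) - secondLargest n (softmaxP n z β)

/-- Rank gap `G_n(β) = max_{i,j} |p_{n,i}(β) - p_{n,j}(β)|`. -/
noncomputable def Ggap (n : ℕ) (z : Fin n → ℝ) (β : ℝ) : ℝ :=
  sSup {x | ∃ i j : Fin n, x = |softmaxP n z β i - softmaxP n z β j|}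

/-- Resolved accumulation scale `Λ_n^{(r)}` (with `sup ∅ = 0`), valued in `ℝ≥0∞`. -/
noncomputable def resolvedLam (n : ℕ) (z : Fin n → ℝ) (r : ℝ) : ℝ≥0∞ :=
  ⨆ t ∈ {t : ℝ | 0 < t ∧ r < Real.log (Ncount n z t)},
    ENNReal.ofReal ((Real.log (Ncount n z t) - r) / t)

/-- Laplace envelope `S_n(β) = sup_{t ≥ 0} (log N_n(t) - β t)`. -/
noncomputable def Sfun (n : ℕ) (z : Fin n → ℝ) (β : ℝ) : ℝ :=
  sSup {x | ∃ t : ℝ, 0 ≤ t ∧ x = Real.log (Ncount n z t) - β * t}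

/-- Rank boundary `B_n^rank(r) = sup {β ≥ 0 : log Z_n(β) ≥ r}`, valued in `ℝ≥0∞`. -/
noncomputable def rankBoundary (n : ℕ) (z : Fin n → ℝ) (r : ℝ) : ℝ≥0∞ :=
  ⨆ β ∈ {β : ℝ | 0 ≤ β ∧ r ≤ Real.log (Zfun n z β)}, ENNReal.ofReal β

/-- `X_n ≍ (log n)^ξ`. -/
def IsLogAsymp (X : ℕ → ℝ) (ξ : ℝ) : Prop :=
  ∃ c₁ c₂ : ℝ, 0 < c₁ ∧ c₁ ≤ c₂ ∧
    ∀ᶠ n : ℕ in Filter.atTop,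
      c₁ * Real.log n ^ ξ ≤ X n ∧ X n ≤ c₂ * Real.log n ^ ξ

section auxst7

open Set Real

lemma aux_tendsto {s : ℝ} (hs : 0 < s) :
    Filter.Tendsto (fun t : ℝ => t * Real.exp (-(s*t))) atTop (nhds 0) := by
  have h1 := Real.tendsto_pow_mul_exp_neg_atTop_nhds_zero 1
  have h2 : Filter.Tendsto (fun t : ℝ => s * t) atTop atTop :=
    Filter.Tendsto.const_mul_atTop hs tendsto_id
  have h3 := (h1.comp h2).const_mul (1/s)
  rw [mul_zero] at h3
  refine h3.congr fun t => ?_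
  simp only [Function.comp_apply, pow_one]
  field_simp

lemma aux_integrable (a : ℝ) {s : ℝ} (hs : 0 < s) :
    IntegrableOn (fun t : ℝ => t * Real.exp (-(s*t))) (Set.Ioi a) := by
  apply integrable_of_isBigO_exp_neg (b := s/2) (by linarith)
  · fun_prop
  · have hne : ∀ x : ℝ, Real.exp (-(s/2) * x) ≠ 0 := fun x => (Real.exp_pos _).ne'
    apply Asymptotics.IsLittleO.isBigO
    rw [Asymptotics.isLittleO_iff_tendsto (fun x hx => absurd hx (hne x))]
    have := aux_tendsto (s := s/2) (by linarith)
    refine this.congr fun t => ?_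
    rw [eq_div_iff (hne t), mul_assoc, ← Real.exp_add]
    congr 2
    ring

lemma aux_intgr1 (g : ℝ) {β : ℝ} (hβ : 0 < β) :
    IntegrableOn (fun t => (β*t - 1) * Real.exp (-(β*t))) (Set.Ioi g) := by
  have h := ((aux_integrable g hβ).const_mul β).sub (exp_neg_integrableOn_Ioi g hβ)
  have he : (fun t : ℝ => (β*t - 1) * Real.exp (-(β*t)))
      = fun t : ℝ => β * (t * Real.exp (-(β*t))) - Real.exp (-β*t) := by
    funext t
    rw [show -β*t = -(β*t) by ring]
    ring
  rw [he]; exact h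

lemma aux_int1 (g : ℝ) {β : ℝ} (hβ : 0 < β) :
    (∫ t in Set.Ioi g, (β*t - 1) * Real.exp (-(β*t))) = g * Real.exp (-(β*g)) := by
  have hderiv : ∀ t ∈ Set.Ici g, HasDerivAt (fun t : ℝ => -(t * Real.exp (-(β*t))))
      ((β*t - 1) * Real.exp (-(β*t))) t := by
    intro t _
    have h1 : HasDerivAt (fun t : ℝ => -(β*t)) (-β) t := by
      simpa using ((hasDerivAt_id t).const_mul β).fun_neg
    have h2 := ((hasDerivAt_id t).fun_mul h1.exp).fun_neg
    refine h2.congr_deriv ?_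
    simp
    ring
  have htend : Filter.Tendsto (fun t : ℝ => -(t * Real.exp (-(β*t)))) atTop (nhds 0) := by
    simpa using (aux_tendsto hβ).neg
  have := integral_Ioi_of_hasDerivAt_of_tendsto' hderiv (aux_intgr1 g hβ) htend
  rw [this]
  ring

lemma aux_intgr2 {β Λ : ℝ} (hΛ : 0 ≤ Λ) (hβ : Λ < β) :
    IntegrableOn (fun t => β * (t * Real.exp (-((β-Λ)*t))) - Real.exp (-(β*t)))
      (Set.Ioi (0:ℝ)) := by
  have hs : 0 < β - Λ := by linarith
  have hβ0 : 0 < β := lt_of_le_of_lt hΛ hβ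
  have h := ((aux_integrable 0 hs).const_mul β).sub (exp_neg_integrableOn_Ioi 0 hβ0)
  have he : (fun t : ℝ => β * (t * Real.exp (-((β-Λ)*t))) - Real.exp (-(β*t)))
      = fun t : ℝ => β * (t * Real.exp (-((β-Λ)*t))) - Real.exp (-β*t) := by
    funext t; rw [show -β*t = -(β*t) by ring]
  rw [he]; exact h

lemma aux_int2 {β Λ : ℝ} (hΛ : 0 ≤ Λ) (hβ : Λ < β) :
    (∫ t in Set.Ioi (0:ℝ), (β * (t * Real.exp (-((β-Λ)*t))) - Real.exp (-(β*t))))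
      = β/(β-Λ)^2 - 1/β := by
  set s := β - Λ with hsdef
  have hs : 0 < s := by simp [hsdef]; linarith
  have hβ0 : 0 < β := lt_of_le_of_lt hΛ hβ
  have hderiv : ∀ t ∈ Set.Ici (0:ℝ), HasDerivAt
      (fun t : ℝ => -((β/s) * (t * Real.exp (-(s*t)))) - (β/s^2) * Real.exp (-(s*t))
        + (1/β) * Real.exp (-(β*t)))
      (β * (t * Real.exp (-(s*t))) - Real.exp (-(β*t))) t := by
    intro t _
    have hs1 : HasDerivAt (fun t : ℝ => -(s*t)) (-s) t := by
      simpa using ((hasDerivAt_id t).const_mul s).fun_neg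
    have hb1 : HasDerivAt (fun t : ℝ => -(β*t)) (-β) t := by
      simpa using ((hasDerivAt_id t).const_mul β).fun_neg
    have h2 := ((((hasDerivAt_id t).fun_mul hs1.exp).const_mul (β/s)).fun_neg.fun_sub
      (hs1.exp.const_mul (β/s^2))).fun_add (hb1.exp.const_mul (1/β))
    refine h2.congr_deriv ?_
    simp
    field_simp
    ring
  have htend : Filter.Tendsto (fun t : ℝ => -((β/s) * (t * Real.exp (-(s*t))))
      - (β/s^2) * Real.exp (-(s*t)) + (1/β) * Real.exp (-(β*t))) atTop (nhds 0) := by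
    have hexp : ∀ c : ℝ, 0 < c →
        Filter.Tendsto (fun t : ℝ => Real.exp (-(c*t))) atTop (nhds 0) := by
      intro c hc
      have h1 : Filter.Tendsto (fun t : ℝ => c * t) atTop atTop :=
        Filter.Tendsto.const_mul_atTop hc tendsto_id
      have h2 := Real.tendsto_exp_neg_atTop_nhds_zero.comp h1
      exact h2.congr fun t => by simp [Function.comp]
    have h := ((((aux_tendsto hs).const_mul (β/s)).neg.sub
      ((hexp s hs).const_mul (β/s^2))).add ((hexp β hβ0).const_mul (1/β)))
    simpa using h
  have := integral_Ioi_of_hasDerivAt_of_tendsto' hderiv (aux_intgr2 hΛ hβ) htend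
  rw [this]
  simp
  ring

end auxst7

theorem stmt7 (n : ℕ) (hn : 2 ≤ n) (z : Fin n → ℝ) (Λ β : ℝ)
    (hΛ : IsLUB (lamSet n z) Λ) (hβ : Λ < β) :
    HasDerivAt (fun b => Zfun n z b)
      (-(∑ j : Fin n, gap n z j * Real.exp (-(β * gap n z j)))) β ∧
    0 ≤ β * ∑ j : Fin n, gap n z j * Real.exp (-(β * gap n z j)) ∧
    β * ∑ j : Fin n, gap n z j * Real.exp (-(β * gap n z j)) ≤ (β / (β - Λ)) ^ 2 - 1 := by
  haveI : NeZero n := ⟨by omega⟩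
  have hfin : (Set.range z).Finite := Set.finite_range z
  have hne : (Set.range z).Nonempty := Set.range_nonempty z
  have hgap : ∀ j, 0 ≤ gap n z j := fun j => by
    have := le_csSup hfin.bddAbove (Set.mem_range_self j)
    simp only [gap, zmax]
    linarith
  obtain ⟨j0, hj0⟩ : ∃ j0, z j0 = zmax n z := by
    have := hne.csSup_mem hfin
    simpa [zmax, Set.mem_range] using this
  have hgap0 : gap n z j0 = 0 := by simp [gap, hj0]
  have hNge1 : ∀ t : ℝ, 0 ≤ t → 1 ≤ Ncount n z t := by
    intro t ht
    have hmem : j0 ∈ {j : Fin n | gap n z j ≤ t} := by simp [hgap0, ht]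
    have h2 : 0 < Ncount n z t := by
      rw [Ncount, Set.ncard_pos (Set.toFinite _)]
      exact ⟨j0, hmem⟩
    omega
  have hΛ0 : 0 ≤ Λ := by
    have hmem : Real.log (Ncount n z 1) / 1 ∈ lamSet n z := ⟨1, one_pos, rfl⟩
    have h1 := hΛ.1 hmem
    have h2 : (0:ℝ) ≤ Real.log (Ncount n z 1) := by
      apply Real.log_nonneg
      exact_mod_cast hNge1 1 (by norm_num)
    rw [div_one] at h1
    linarith
  have hβ0 : 0 < β := lt_of_le_of_lt hΛ0 hβ
  have hNle : ∀ t : ℝ, 0 < t → (Ncount n z t : ℝ) ≤ Real.exp (Λ * t) := by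
    intro t ht
    have h1 := hΛ.1 ⟨t, ht, rfl⟩
    have h2 : Real.log (Ncount n z t) ≤ Λ * t := by
      rw [div_le_iff₀ ht] at h1; linarith [h1]
    have h3 : (1:ℝ) ≤ (Ncount n z t : ℝ) := by exact_mod_cast hNge1 t ht.le
    calc (Ncount n z t : ℝ) = Real.exp (Real.log (Ncount n z t)) :=
          (Real.exp_log (by linarith)).symm
      _ ≤ Real.exp (Λ*t) := Real.exp_le_exp.2 h2
  -- derivative
  have hD : ∀ j : Fin n, HasDerivAt (fun b => Real.exp (-(b * gap n z j)))
      (-(gap n z j * Real.exp (-(β * gap n z j)))) β := by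
    intro j
    have h1 : HasDerivAt (fun b : ℝ => -(b * gap n z j)) (-(gap n z j)) β := by
      simpa using ((hasDerivAt_id β).mul_const (gap n z j)).fun_neg
    have h2 := h1.exp
    convert h2 using 1
    ring
  have hderivZ : HasDerivAt (fun b => Zfun n z b)
      (-(∑ j : Fin n, gap n z j * Real.exp (-(β * gap n z j)))) β := by
    have h := HasDerivAt.fun_sum (fun j (_ : j ∈ Finset.univ) => hD j)
    simp only [Zfun]
    refine h.congr_deriv ?_
    rw [← Finset.sum_neg_distrib]
  have hS0 : 0 ≤ ∑ j : Fin n, gap n z j * Real.exp (-(β * gap n z j)) :=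
    Finset.sum_nonneg fun j _ => mul_nonneg (hgap j) (Real.exp_pos _).le
  refine ⟨hderivZ, mul_nonneg hβ0.le hS0, ?_⟩
  -- main bound
  set h : ℝ → ℝ := fun t => (β*t - 1) * Real.exp (-(β*t)) with hhdef
  set G : ℝ → ℝ := fun t => β * (t * Real.exp (-((β-Λ)*t))) - Real.exp (-(β*t)) with hGdef
  have hintj : ∀ j : Fin n, Integrable ((Set.Ioi (gap n z j)).indicator h) := by
    intro j
    rw [integrable_indicator_iff measurableSet_Ioi]
    exact aux_intgr1 _ hβ0
  have key : ∀ j : Fin n, gap n z j * Real.exp (-(β * gap n z j))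
      = ∫ t in Set.Ioi (0:ℝ), (Set.Ioi (gap n z j)).indicator h t := by
    intro j
    rw [MeasureTheory.setIntegral_indicator measurableSet_Ioi, Set.Ioi_inter_Ioi,
      sup_eq_right.mpr (hgap j)]
    exact (aux_int1 (gap n z j) hβ0).symm
  have hsum : (∑ j : Fin n, gap n z j * Real.exp (-(β * gap n z j)))
      = ∫ t in Set.Ioi (0:ℝ), ∑ j : Fin n, (Set.Ioi (gap n z j)).indicator h t := by
    rw [MeasureTheory.integral_finset_sum _ (fun j _ => (hintj j).integrableOn)]
    exact Finset.sum_congr rfl fun j _ => key j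
  have hmono : (∫ t in Set.Ioi (0:ℝ), ∑ j : Fin n, (Set.Ioi (gap n z j)).indicator h t)
      ≤ ∫ t in Set.Ioi (0:ℝ), G t := by
    apply MeasureTheory.setIntegral_mono_on
      (MeasureTheory.integrable_finset_sum _ (fun j _ => (hintj j).integrableOn))
      (aux_intgr2 hΛ0 hβ) measurableSet_Ioi
    intro t ht
    rw [Set.mem_Ioi] at ht
    classical
    have hcount : (∑ j : Fin n, (Set.Ioi (gap n z j)).indicator h t)
        = ((Finset.univ.filter fun j : Fin n => gap n z j < t).card : ℝ) * h t := by
      simp only [Set.indicator_apply, Set.mem_Ioi]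
      rw [Finset.sum_ite, Finset.sum_const, Finset.sum_const_zero, add_zero, nsmul_eq_mul]
    rw [hcount]
    set c := (Finset.univ.filter fun j : Fin n => gap n z j < t).card with hcdef
    have hc1 : 1 ≤ (c:ℝ) := by
      have : 0 < c := Finset.card_pos.2 ⟨j0, by simp [hgap0, ht]⟩
      exact_mod_cast this
    have hcN : (c:ℝ) ≤ Real.exp (Λ*t) := by
      have h2 : c = ({j : Fin n | gap n z j < t}).ncard := by
        rw [hcdef, ← Set.ncard_coe_finset]
        congr 1
        ext j; simp
      have h1 : ({j : Fin n | gap n z j < t}).ncard ≤ Ncount n z t := by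
        apply Set.ncard_le_ncard _ (Set.toFinite _)
        intro j hj
        simp only [Set.mem_setOf_eq] at *
        exact hj.le
      calc (c:ℝ) ≤ (Ncount n z t : ℝ) := by exact_mod_cast h2 ▸ h1
        _ ≤ Real.exp (Λ*t) := hNle t ht
    have hE : (0:ℝ) < Real.exp (-(β*t)) := Real.exp_pos _
    have hA1 : (1:ℝ) ≤ Real.exp (Λ*t) := by
      rw [← Real.exp_zero]
      exact Real.exp_le_exp.2 (by positivity)
    have hAE : Real.exp (Λ*t) * Real.exp (-(β*t)) = Real.exp (-((β-Λ)*t)) := by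
      rw [← Real.exp_add]; congr 1; ring
    have hbt0 : 0 ≤ β*t := by positivity
    have hkey0 : (c:ℝ) * (β*t - 1) ≤ β*t*Real.exp (Λ*t) - 1 := by
      rcases le_or_gt 1 (β*t) with hbt | hbt
      · nlinarith [mul_le_mul_of_nonneg_right hcN (sub_nonneg.2 hbt)]
      · have q1 : (c:ℝ) * (β*t-1) ≤ 1 * (β*t-1) :=
          mul_le_mul_of_nonpos_right hc1 (by linarith)
        nlinarith
    have hkey : (c:ℝ) * ((β*t - 1) * Real.exp (-(β*t)))
        ≤ (β*t*Real.exp (Λ*t) - 1) * Real.exp (-(β*t))  := by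
      rw [← mul_assoc]
      exact mul_le_mul_of_nonneg_right hkey0 hE.le
    calc (c:ℝ) * h t ≤ (β*t*Real.exp (Λ*t) - 1) * Real.exp (-(β*t)) := hkey
      _ = G t := by
        simp only [hGdef, ← hAE]
        ring
  have hfinal : (∑ j : Fin n, gap n z j * Real.exp (-(β * gap n z j)))
      ≤ β/(β-Λ)^2 - 1/β := by
    rw [hsum]
    exact hmono.trans_eq (aux_int2 hΛ0 hβ)
  have hβΛ : (0:ℝ) < β - Λ := by linarith
  calc β * ∑ j : Fin n, gap n z j * Real.exp (-(β * gap n z j))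
      ≤ β * (β/(β-Λ)^2 - 1/β) := by
        apply mul_le_mul_of_nonneg_left hfinal hβ0.le
    _ = (β / (β - Λ)) ^ 2 - 1 := by
        rw [div_pow]
        field_simp
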